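/- arXiv:2210.04164 — 4 statements merged into one kernel-verified Lean document; each statement's English description precedes it below -/
import Mathlib

section
/- Let G be a finite group, (π,V) an irreducible complex representation of G with character χ, H ≤ G a subgroup, and λ a one-dimensional character of H. Then for every g ∈ G, the absolute value of (1/|H|) · Σ_{h∈H} λ(h)⁻¹ · χ(gh) is at most the multiplicity ⟨χ|_H, λ⟩_H of λ in the restriction of χ to H. -/
open CategoryTheory

open Matrix ComplexOrder MatrixOrder in
theorem aux {G : Type} [Group G] [Fintype G] {ι : Type} [Fintype ι] [DecidableEq ι]
    (M : G →* Matrix ι ι ℂ) (H : Subgroup G) [Fintype H] (lam : H →* ℂˣ) (g : G) :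
    ‖(Fintype.card H : ℂ)⁻¹ *
        ∑ h : H, (((lam h)⁻¹ : ℂˣ) : ℂ) * (M (g * h)).trace‖ ≤
      ((Fintype.card H : ℂ)⁻¹ *
        ∑ h : H, (M (h : G)).trace * (starRingEnd ℂ) ((lam h : ℂˣ) : ℂ)).re := by
  classical
  -- the invariant positive definite matrix
  set Q : Matrix ι ι ℂ := ∑ x : G, (M x)ᴴ * M x with hQdef
  have hsum : ∀ (s : Finset G), (∑ x ∈ s, (M x)ᴴ * M x).PosSemidef :=
    fun s => Finset.sum_induction _ _ (fun a b ha hb => ha.add hb)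
      (Matrix.PosSemidef.zero) (fun x _ => Matrix.posSemidef_conjTranspose_mul_self (M x))
  have hQsd : Q.PosSemidef := hsum _
  have hQpd : Q.PosDef := by
    have h1 : Q = (M 1)ᴴ * M 1 + ∑ x ∈ (Finset.univ : Finset G).erase 1, (M x)ᴴ * M x := by
      rw [hQdef]
      exact (Finset.add_sum_erase Finset.univ (fun x => (M x)ᴴ * M x)
        (Finset.mem_univ (1:G))).symm
    rw [h1, _root_.map_one]
    simp only [conjTranspose_one, one_mul]
    exact Matrix.PosDef.add_posSemidef Matrix.PosDef.one (hsum _)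
  have hQinv : ∀ x : G, (M x)ᴴ * Q * M x = Q := by
    intro x
    rw [hQdef, Finset.mul_sum, Finset.sum_mul]
    refine Fintype.sum_equiv (Equiv.mulRight x) _ _ fun y => ?_
    simp only [Equiv.coe_mulRight, _root_.map_mul, conjTranspose_mul, Matrix.mul_assoc]
  -- square root of Q
  set S : Matrix ι ι ℂ := CFC.sqrt Q with hSdef
  have hS2 : S * S = Q := CFC.sqrt_mul_sqrt_self Q hQsd.nonneg
  have hSH : Sᴴ = S := (CFC.sqrt_nonneg Q).posSemidef.1
  have hSunit : IsUnit S.det := by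
    have : S.det * S.det = Q.det := by rw [← Matrix.det_mul, hS2]
    have hQ : Q.det ≠ 0 := hQpd.det_pos.ne'
    exact isUnit_of_mul_isUnit_left (this ▸ hQ.isUnit)
  have hSS : S * S⁻¹ = 1 := Matrix.mul_nonsing_inv S hSunit
  have hSS' : S⁻¹ * S = 1 := Matrix.nonsing_inv_mul S hSunit
  -- the unitarized representation
  set U : G → Matrix ι ι ℂ := fun x => S * M x * S⁻¹ with hUdef
  have hUmul : ∀ x y : G, U x * U y = U (x * y) := by
    intro x y
    simp only [hUdef, _root_.map_mul, Matrix.mul_assoc]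
    rw [← Matrix.mul_assoc S⁻¹ S, hSS', Matrix.one_mul]
  have hUone : U 1 = 1 := by simp [hUdef, hSS]
  have hUtr : ∀ x : G, (U x).trace = (M x).trace := by
    intro x
    rw [hUdef]
    rw [Matrix.trace_mul_comm, ← Matrix.mul_assoc, hSS', Matrix.one_mul]
  have hUuni : ∀ x : G, (U x)ᴴ * U x = 1 := by
    intro x
    have hSinvH : S⁻¹ᴴ = S⁻¹ := by rw [Matrix.conjTranspose_nonsing_inv, hSH]
    calc (U x)ᴴ * U x = S⁻¹ * ((M x)ᴴ * (S * S) * M x) * S⁻¹ := by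
          simp only [hUdef, conjTranspose_mul, hSinvH, hSH, Matrix.mul_assoc]
      _ = 1 := by
          rw [hS2, hQinv, ← hS2, Matrix.mul_assoc, Matrix.mul_assoc S S S⁻¹, hSS,
            Matrix.mul_one, hSS']
  have hUinvH : ∀ x : G, (U x)ᴴ = U x⁻¹ := by
    intro x
    calc (U x)ᴴ = (U x)ᴴ * (U x * U x⁻¹) := by
          rw [hUmul, mul_inv_cancel, hUone, Matrix.mul_one]
      _ = U x⁻¹ := by rw [← Matrix.mul_assoc, hUuni, Matrix.one_mul]
  -- facts about lam
  have hlc : ∀ h : H, (starRingEnd ℂ) ((lam h : ℂˣ) : ℂ) = (((lam h)⁻¹ : ℂˣ) : ℂ) := by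
    intro h
    have hpow : ((lam h : ℂˣ) : ℂ) ^ Fintype.card H = 1 := by
      rw [← Units.val_pow_eq_pow_val, ← _root_.map_pow, pow_card_eq_one, _root_.map_one,
        Units.val_one]
    have hn : ‖((lam h : ℂˣ) : ℂ)‖ = 1 :=
      Complex.norm_eq_one_of_pow_eq_one hpow Fintype.card_ne_zero
    rw [← Complex.inv_eq_conj hn, ← Units.val_inv_eq_inv_val]
  -- the projection matrix
  set c : ℂ := (Fintype.card H : ℂ)⁻¹ with hcdef
  set F : H → Matrix ι ι ℂ := fun h => (((lam h)⁻¹ : ℂˣ) : ℂ) • U (h : G) with hFdef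
  set P : Matrix ι ι ℂ := c • ∑ h : H, F h with hPdef
  have hFmul : ∀ h k : H, F h * F k = F (h * k) := by
    intro h k
    simp only [hFdef, Matrix.smul_mul, Matrix.mul_smul, hUmul, smul_smul, _root_.map_mul,
      _root_.mul_inv_rev, Units.val_mul, Subgroup.coe_mul]
  have hFH : ∀ h : H, (F h)ᴴ = F h⁻¹ := by
    intro h
    simp only [hFdef, Matrix.conjTranspose_smul, hUinvH]
    rw [_root_.map_inv, inv_inv]
    congr 1
    · rw [← hlc h]
      exact Complex.conj_conj _
  have hcard : (Fintype.card H : ℂ) ≠ 0 := Nat.cast_ne_zero.mpr Fintype.card_ne_zero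
  -- idempotent
  have hPP : P * P = P := by
    rw [hPdef, Matrix.smul_mul, Matrix.mul_smul, smul_smul, Finset.sum_mul]
    have h1 : ∀ h : H, (F h) * (∑ k : H, F k) = ∑ k : H, F k := by
      intro h
      rw [Finset.mul_sum]
      exact Fintype.sum_equiv (Equiv.mulLeft h) _ _ fun k => (hFmul h k).trans (by rfl)
    simp_rw [h1]
    rw [Finset.sum_const, Finset.card_univ, ← Nat.cast_smul_eq_nsmul ℂ, smul_smul]
    congr 1
    rw [hcdef]
    field_simp
  -- hermitian
  have hPH : Pᴴ = P := by
    rw [hPdef, Matrix.conjTranspose_smul, Matrix.conjTranspose_sum]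
    have hc : star c = c := by rw [hcdef]; simp
    rw [hc]
    have h2 : ∑ h : H, (F h)ᴴ = ∑ h : H, F h :=
      Fintype.sum_equiv (Equiv.inv H) _ _ fun h =>
        (hFH h).trans (congrArg F (rfl : h⁻¹ = (Equiv.inv H) h))
    rw [h2]
  -- trace identities
  have hUgP : U g * P = c • ∑ h : H, (((lam h)⁻¹ : ℂˣ) : ℂ) • U (g * h) := by
    rw [hPdef, Matrix.mul_smul, Finset.mul_sum]
    congr 1
    refine Finset.sum_congr rfl fun h _ => ?_
    rw [hFdef, Matrix.mul_smul, hUmul]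
  have htr1 : (U g * P).trace
      = c * ∑ h : H, (((lam h)⁻¹ : ℂˣ) : ℂ) * (M (g * h)).trace := by
    rw [hUgP, Matrix.trace_smul, Matrix.trace_sum, smul_eq_mul]
    congr 1
    exact Finset.sum_congr rfl fun h _ => by rw [Matrix.trace_smul, hUtr, smul_eq_mul]
  have htr2 : P.trace
      = c * ∑ h : H, (M (h : G)).trace * (starRingEnd ℂ) ((lam h : ℂˣ) : ℂ) := by
    rw [hPdef, Matrix.trace_smul, Matrix.trace_sum, smul_eq_mul]
    congr 1
    refine Finset.sum_congr rfl fun h _ => ?_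
    rw [hFdef, Matrix.trace_smul, hUtr, smul_eq_mul, hlc, mul_comm]
  -- Cauchy-Schwarz
  set toE : ((ι × ι) → ℂ) → EuclideanSpace ℂ (ι × ι) :=
    fun f => ((WithLp.equiv 2 ((ι × ι) → ℂ)).symm f) with htoE
  have hin : ∀ A B : Matrix ι ι ℂ,
      (inner (𝕜 := ℂ) (toE fun p => A p.1 p.2)
        (toE fun p => B p.1 p.2)) = (Aᴴ * B).trace := by
    intro A B
    simp only [PiLp.inner_apply, RCLike.inner_apply, Matrix.trace, Matrix.diag_apply,
      Matrix.mul_apply, Matrix.conjTranspose_apply, starRingEnd_apply]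
    rw [← Finset.sum_product', Finset.univ_product_univ]
    exact Fintype.sum_equiv (Equiv.prodComm ι ι) _ _ fun p => mul_comm _ _
  set a : EuclideanSpace ℂ (ι × ι) := toE fun p => P p.1 p.2 with hadef
  set b : EuclideanSpace ℂ (ι × ι) := toE fun p => (U g * P) p.1 p.2 with hbdef
  have hab : (inner ℂ a b : ℂ) = (U g * P).trace := by
    have h3 := hin P (U g * P)
    rw [hPH] at h3
    calc (inner ℂ a b : ℂ) = (P * (U g * P)).trace := h3
      _ = (U g * P * P).trace := by rw [Matrix.trace_mul_comm]
      _ = (U g * (P * P)).trace := by rw [Matrix.mul_assoc]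
      _ = (U g * P).trace := by rw [hPP]
  have haa : (inner ℂ a a : ℂ) = P.trace := by
    have h3 := hin P P
    rw [hPH, hPP] at h3
    exact h3
  have hbb : (inner ℂ b b : ℂ) = P.trace := by
    have hmat : (U g * P)ᴴ * (U g * P) = Pᴴ * P := by
      rw [Matrix.conjTranspose_mul, Matrix.mul_assoc, ← Matrix.mul_assoc ((U g)ᴴ), hUuni,
        Matrix.one_mul]
    have h3 := hin (U g * P) (U g * P)
    rw [hmat, hPH, hPP] at h3
    exact h3
  -- final inequality
  rw [← htr1, ← htr2, ← hab, ← haa]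
  have h4 : ‖a‖ = ‖b‖ := by
    have h5 : ‖a‖ ^ 2 = ‖b‖ ^ 2 := by
      rw [← inner_self_eq_norm_sq (𝕜 := ℂ), ← inner_self_eq_norm_sq (𝕜 := ℂ), haa, hbb]
    nlinarith [norm_nonneg a, norm_nonneg b]
  calc ‖(inner ℂ a b : ℂ)‖ = ‖(inner ℂ a b : ℂ)‖ := rfl
    _ ≤ ‖a‖ * ‖b‖ := norm_inner_le_norm a b
    _ = ‖a‖ ^ 2 := by rw [← h4, sq]
    _ = RCLike.re (inner ℂ a a : ℂ) := (inner_self_eq_norm_sq (𝕜 := ℂ) a).symm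
    _ = (inner ℂ a a : ℂ).re := rfl

/-- Let `G` be a finite group, `V` an irreducible complex representation of `G` with
character `χ`, `H ≤ G` a subgroup, and `lam` a one-dimensional character of `H`. Then for
every `g ∈ G`, `|(1/|H|) Σ_{h∈H} lam(h)⁻¹ χ(g h)|` is at most the multiplicity
`⟨χ|_H, lam⟩_H = (1/|H|) Σ_{h∈H} χ(h) · conj(lam h)` of `lam` in `χ|_H`. -/
theorem stmt0 {G : Type} [Group G] [Fintype G] (V : FDRep ℂ G) [Simple V]
    (H : Subgroup G) [Fintype H] (lam : H →* ℂˣ) (g : G) :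
    ‖(Fintype.card H : ℂ)⁻¹ *
        ∑ h : H, (((lam h)⁻¹ : ℂˣ) : ℂ) * V.character (g * h)‖ ≤
      ((Fintype.card H : ℂ)⁻¹ *
        ∑ h : H, V.character h * (starRingEnd ℂ) ((lam h : ℂˣ) : ℂ)).re := by
  classical
  let b := Module.finBasis ℂ V
  let M : G →* Matrix (Fin (Module.finrank ℂ V)) (Fin (Module.finrank ℂ V)) ℂ :=
    ((LinearMap.toMatrixAlgEquiv b).toAlgHom.toRingHom.toMonoidHom).comp V.ρ
  have hchar : ∀ x : G, V.character x = (M x).trace := fun x =>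
    LinearMap.trace_eq_matrix_trace ℂ b (V.ρ x)
  simp_rw [hchar]
  exact aux M H lam g
end

section
/- Let H(x) = -x·log₂(x) - (1-x)·log₂(1-x) be the binary entropy function. Let 0 < δ ≤ 1/2, b ∈ [δ, 1/2], a ∈ [δ, b], and let d > 1/δ⁴ be such that bd, ad, and d are integers. Then binomial(d, (b-a)d) ≤ binomial(d, bd)^{1-δ²}. -/
lemma aux_choose_mono_half {d j k : ℕ} (hjk : j ≤ k) (hk : 2 * k ≤ d) :
    d.choose j ≤ d.choose k := by
  induction k, hjk using Nat.le_induction with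
  | base => exact le_rfl
  | succ k hk' ih =>
    have h1 : d.choose j ≤ d.choose k := ih (by omega)
    have h2 : k < d / 2 := by omega
    exact h1.trans (Nat.choose_le_succ_of_lt_half_left h2)

lemma aux_choose_le_two_pow {d k : ℕ} (h : k ≤ d) : d.choose k ≤ 2 ^ d := by
  have h1 : d.choose k ≤ ∑ m ∈ Finset.range (d + 1), d.choose m :=
    Finset.single_le_sum (fun i _ => Nat.zero_le _) (Finset.mem_range.mpr (by omega))
  rwa [Nat.sum_range_choose] at h1

set_option maxHeartbeats 1000000 in
/-- Let `0 < δ ≤ 1/2`, `b ∈ [δ, 1/2]`, `a ∈ [δ, b]`, and `d > 1/δ⁴` such that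
`b·d`, `a·d` and `d` are integers (we encode `b·d = bn`, `a·d = an` with `bn an : ℕ`).
Then `C(d, (b-a)d) ≤ C(d, bd)^(1-δ²)`. -/
theorem stmt9 (δ a b : ℝ) (d bn an : ℕ)
    (hδ0 : 0 < δ) (hδhalf : δ ≤ 1 / 2)
    (hbl : δ ≤ b) (hbu : b ≤ 1 / 2)
    (hal : δ ≤ a) (hau : a ≤ b)
    (hd : 1 / δ ^ 4 < (d : ℝ))
    (hbn : (bn : ℝ) = b * d) (han : (an : ℝ) = a * d) :
    (d.choose (bn - an) : ℝ) ≤ (d.choose bn : ℝ) ^ ((1 : ℝ) - δ ^ 2) := by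
  have hδ1 : δ < 1 := lt_of_le_of_lt hδhalf (by norm_num)
  have h1δ : (0:ℝ) < 1 - δ := by linarith
  have hd0 : (0:ℝ) < d := lt_trans (by positivity) hd
  have hδ3 : δ ^ 3 ≤ (1/2:ℝ) ^ 3 := pow_le_pow_left₀ hδ0.le hδhalf 3
  -- δ * d > 8
  have hδd : (8:ℝ) < δ * d := by
    have h1 : 1 / δ ^ 3 < δ * d := by
      rw [div_lt_iff₀ (by positivity)]
      rw [div_lt_iff₀ (by positivity)] at hd
      nlinarith [hd]
    have h2 : (8:ℝ) ≤ 1 / δ ^ 3 := by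
      rw [le_div_iff₀ (by positivity)]
      nlinarith [hδ3]
    linarith
  -- basic nat facts
  have hanbn : an ≤ bn := by
    have h : (an:ℝ) ≤ bn := by rw [hbn, han]; nlinarith
    exact_mod_cast h
  have h2bn : 2 * bn ≤ d := by
    have h : ((2 * bn : ℕ):ℝ) ≤ (d:ℕ) := by push_cast [hbn]; nlinarith
    exact_mod_cast h
  have hbnd : bn ≤ d := by omega
  set t : ℕ := an / 2 with ht
  have htan : t ≤ an := Nat.div_le_self _ _
  have han8 : (8:ℝ) < an := by rw [han]; nlinarith
  have htreal : ((an:ℝ) - 1) / 2 ≤ t := by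
    have h2 : an ≤ 2 * t + 1 := by omega
    have h3 : (an:ℝ) ≤ 2 * t + 1 := by exact_mod_cast h2
    linarith
  have httop : (t:ℝ) ≤ (an:ℝ) / 2 := by
    have h2 : 2 * t ≤ an := by omega
    have h3 : ((2 * t : ℕ):ℝ) ≤ (an:ℝ) := by exact_mod_cast h2
    push_cast at h3; linarith
  set r : ℝ := (1 + δ) / (1 - δ) with hr
  have hr0 : (0:ℝ) < r := by rw [hr]; positivity
  -- key product bound
  have key : ∀ i : ℕ, i ≤ t →
      (d.choose (bn - an) : ℝ) * r ^ i ≤ d.choose (bn - an + i) := by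
    intro i
    induction i with
    | zero => intro _; simp
    | succ i ih =>
      intro hit
      have H := ih (by omega)
      set j : ℕ := bn - an + i with hj
      have hjt : j + 1 ≤ bn - an + t := by omega
      have hjbn : j + 1 ≤ bn := by omega
      have hjd : j + 1 ≤ d := by omega
      have hcast : ((bn - an : ℕ):ℝ) = (bn:ℝ) - an := Nat.cast_sub hanbn
      have hj1 : (j:ℝ) + 1 ≤ (1 - δ) / 2 * d := by
        have h1 : ((j + 1 : ℕ):ℝ) ≤ ((bn - an + t : ℕ):ℝ) := by exact_mod_cast hjt
        push_cast [hcast] at h1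
        have e1 : b * (d:ℝ) ≤ 1/2 * d := by nlinarith
        have e2 : δ * (d:ℝ) ≤ a * d := by nlinarith
        linarith [h1, httop, hbn, han, hbn ▸ h1]
      have hdj : (1 + δ) / 2 * d ≤ (d:ℝ) - j := by linarith
      have hrle : r * ((j:ℝ) + 1) ≤ (d:ℝ) - j := by
        have h1 : r * ((j:ℝ) + 1) ≤ r * ((1 - δ) / 2 * d) :=
          mul_le_mul_of_nonneg_left hj1 (le_of_lt hr0)
        have h2 : r * ((1 - δ) / 2 * d) = (1 + δ) / 2 * d := by
          rw [hr]; field_simp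
        linarith
      have hid : (d.choose (j+1) : ℝ) * ((j:ℝ) + 1) = (d.choose j : ℝ) * ((d:ℝ) - j) := by
        have h := Nat.choose_succ_right_eq d j
        have h2 : ((d.choose (j+1) * (j+1) : ℕ):ℝ) = ((d.choose j * (d - j) : ℕ):ℝ) := by
          exact_mod_cast congrArg (Nat.cast (R := ℝ)) h
        push_cast [Nat.cast_sub (by omega : j ≤ d)] at h2
        linarith
      have hjpos : (0:ℝ) < (j:ℝ) + 1 := by positivity
      have step : (d.choose j : ℝ) * r ≤ d.choose (j+1) := by
        rw [← mul_le_mul_iff_left₀ hjpos]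
        calc (d.choose j : ℝ) * r * ((j:ℝ) + 1) = (d.choose j : ℝ) * (r * ((j:ℝ)+1)) := by ring
          _ ≤ (d.choose j : ℝ) * ((d:ℝ) - j) :=
              mul_le_mul_of_nonneg_left hrle (Nat.cast_nonneg _)
          _ = (d.choose (j+1) : ℝ) * ((j:ℝ) + 1) := hid.symm
      calc (d.choose (bn - an) : ℝ) * r ^ (i+1)
          = ((d.choose (bn - an) : ℝ) * r ^ i) * r := by ring
        _ ≤ (d.choose j : ℝ) * r := mul_le_mul_of_nonneg_right H (le_of_lt hr0)
        _ ≤ d.choose (j+1) := step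
  have h1 : (d.choose (bn - an) : ℝ) * r ^ t ≤ d.choose bn := by
    refine le_trans (key t le_rfl) ?_
    exact_mod_cast aux_choose_mono_half (by omega : bn - an + t ≤ bn) h2bn
  -- log bound : r ^ t ≥ (choose bn)^(δ^2)
  have hCpos : (0:ℝ) < d.choose bn := by
    exact_mod_cast Nat.choose_pos hbnd
  have hlogr : (5/3) * δ ≤ Real.log r := by
    have hl1 : Real.log (1 / (1 + δ)) ≤ 1 / (1 + δ) - 1 :=
      Real.log_le_sub_one_of_pos (by positivity)
    rw [Real.log_div one_ne_zero (by positivity), Real.log_one] at hl1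
    have he : 1 / (1 + δ) - 1 = -(δ / (1 + δ)) := by field_simp; ring
    rw [he] at hl1
    have hl1' : δ / (1 + δ) ≤ Real.log (1 + δ) := by linarith
    have hl2 : Real.log (1 - δ) ≤ -δ := by
      have := Real.log_le_sub_one_of_pos h1δ
      linarith
    rw [hr, Real.log_div (by positivity) (ne_of_gt h1δ)]
    have h53 : (5/3) * δ ≤ δ / (1 + δ) + δ := by
      rw [div_add' _ _ _ (by positivity : (1:ℝ) + δ ≠ 0), le_div_iff₀ (by positivity)]
      nlinarith
    linarith
  have hlog2 : Real.log 2 < 0.6931471808 := Real.log_two_lt_d9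
  have hexp : δ ^ 2 * d * Real.log 2 ≤ (t:ℝ) * Real.log r := by
    have hL : Real.log 2 ≤ 0.7 := by linarith
    have h0 : δ ^ 2 * d * Real.log 2 ≤ (5/6) * δ * (δ * d - 1) := by
      have ha : δ * (δ * d) * Real.log 2 ≤ δ * (δ * d) * 0.7 :=
        mul_le_mul_of_nonneg_left hL (by positivity)
      have hb : δ * 8 < δ * (δ * d) := by
        exact mul_lt_mul_of_pos_left hδd hδ0
      nlinarith [ha, hb]
    have h2 : (5/6) * δ * (δ * d - 1) ≤ (5/6) * δ * ((an:ℝ) - 1) := by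
      have hda : δ * (d:ℝ) ≤ (an:ℝ) := by rw [han]; nlinarith
      nlinarith [hda]
    have h3 : (5/6) * δ * ((an:ℝ) - 1) = ((an:ℝ) - 1)/2 * ((5/3) * δ) := by ring
    have h4 : ((an:ℝ) - 1)/2 * ((5/3) * δ) ≤ (t:ℝ) * Real.log r := by
      have ha1 : (0:ℝ) ≤ ((an:ℝ) - 1)/2 := by linarith
      have hb1 : (0:ℝ) ≤ (5/3) * δ := by positivity
      exact mul_le_mul htreal hlogr hb1 (Nat.cast_nonneg _)
    linarith
  have hrt : (d.choose bn : ℝ) ^ (δ ^ 2 : ℝ) ≤ r ^ t := by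
    have hC2 : (d.choose bn : ℝ) ≤ (2:ℝ) ^ (d:ℕ) := by
      exact_mod_cast aux_choose_le_two_pow hbnd
    have step1 : (d.choose bn : ℝ) ^ (δ ^ 2 : ℝ) ≤ ((2:ℝ) ^ (d:ℕ)) ^ (δ ^ 2 : ℝ) :=
      Real.rpow_le_rpow (le_of_lt hCpos) hC2 (by positivity)
    have step2 : ((2:ℝ) ^ (d:ℕ)) ^ (δ ^ 2 : ℝ) = Real.exp (δ ^ 2 * d * Real.log 2) := by
      rw [← Real.rpow_natCast 2 d, ← Real.rpow_mul (by norm_num),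
        Real.rpow_def_of_pos (by norm_num)]
      exact congrArg Real.exp (by ring)
    have step3 : Real.exp (δ ^ 2 * d * Real.log 2) ≤ Real.exp ((t:ℝ) * Real.log r) :=
      Real.exp_le_exp.mpr hexp
    have step4 : Real.exp ((t:ℝ) * Real.log r) = r ^ t := by
      rw [← Real.log_pow, Real.exp_log (by positivity)]
    calc (d.choose bn : ℝ) ^ (δ ^ 2 : ℝ) ≤ ((2:ℝ) ^ (d:ℕ)) ^ (δ ^ 2 : ℝ) := step1
      _ = Real.exp (δ ^ 2 * d * Real.log 2) := step2
      _ ≤ Real.exp ((t:ℝ) * Real.log r) := step3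
      _ = r ^ t := step4
  -- final assembly
  have hfin : (d.choose (bn - an) : ℝ) * (d.choose bn : ℝ) ^ (δ ^ 2 : ℝ) ≤ d.choose bn := by
    calc (d.choose (bn - an) : ℝ) * (d.choose bn : ℝ) ^ (δ ^ 2 : ℝ)
        ≤ (d.choose (bn - an) : ℝ) * r ^ t :=
          mul_le_mul_of_nonneg_left hrt (Nat.cast_nonneg _)
      _ ≤ d.choose bn := h1
  have heq : (d.choose bn : ℝ) ^ ((1:ℝ) - δ ^ 2) * (d.choose bn : ℝ) ^ (δ ^ 2 : ℝ) = d.choose bn := by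
    rw [← Real.rpow_add hCpos]
    norm_num
  have hp : (0:ℝ) < (d.choose bn : ℝ) ^ (δ ^ 2 : ℝ) := Real.rpow_pos_of_pos hCpos _
  refine le_of_mul_le_mul_right ?_ hp
  rw [heq]
  exact hfin
end

section
/- For 0 < b ≤ 1/2 and 0 < δ ≤ b, the binary entropy function H(x) = -x·log₂(x) - (1-x)·log₂(1-x) satisfies H(b) - H(b-δ) ≥ 2δ². -/
open Real Set

lemma binEntropy2_eq (x : ℝ) : (-x * Real.logb 2 x - (1 - x) * Real.logb 2 (1 - x))
    = Real.binEntropy x / Real.log 2 := by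
  simp [Real.binEntropy, Real.logb, Real.log_inv]
  ring

/-- Key pointwise inequality: for `0 < x ≤ 1/2`, `(2-4x)·log 2 ≤ log(1-x) - log x`. -/
lemma key_ineq {x : ℝ} (hx0 : 0 < x) (hx2 : x ≤ 1/2) :
    (2 - 4*x) * Real.log 2 ≤ Real.log (1 - x) - Real.log x := by
  set f : ℝ → ℝ := fun y => Real.log (1 - y) - Real.log y - (2 - 4*y) * Real.log 2 with hf
  have hanti : StrictAntiOn f (Icc x (1/2)) := by
    apply strictAntiOn_of_deriv_neg (convex_Icc _ _)
    · apply ContinuousOn.sub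
      apply ContinuousOn.sub
      · exact (Real.continuousOn_log.comp (by fun_prop) (by
          intro y hy; simp only [mem_Icc] at hy
          simp only [mem_compl_iff, mem_singleton_iff]
          intro h; nlinarith [hy.1, hy.2]))
      · exact Real.continuousOn_log.mono (by
          intro y hy; simp only [mem_Icc] at hy
          simp only [mem_compl_iff, mem_singleton_iff]
          intro h; nlinarith [hy.1, hy.2])
      · fun_prop
    · intro y hy
      rw [interior_Icc, mem_Ioo] at hy
      have hy0 : 0 < y := lt_trans hx0 hy.1
      have hy1 : y < 1 := by linarith [hy.2]
      have h1y : 0 < 1 - y := by linarith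
      have hd : HasDerivAt f (-(1/(1-y)) - 1/y + 4 * Real.log 2) y := by
        have h1 : HasDerivAt (fun y : ℝ => Real.log (1 - y)) (-(1/(1-y))) y := by
          have := (Real.hasDerivAt_log h1y.ne').comp y
            ((hasDerivAt_const y (1:ℝ)).sub (hasDerivAt_id y))
          simpa [Function.comp_def] using this.congr_deriv (by ring)
        have h2 : HasDerivAt (fun y : ℝ => Real.log y) (1/y) y := by
          simpa using Real.hasDerivAt_log hy0.ne'
        have h3 : HasDerivAt (fun y : ℝ => (2 - 4*y) * Real.log 2)
            (-4 * Real.log 2) y := by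
          have : HasDerivAt (fun y : ℝ => (2 - 4*y)) (-4) y := by
            simpa [Pi.sub_def] using ((hasDerivAt_const y (2:ℝ)).sub
              ((hasDerivAt_id y).const_mul 4))
          simpa using this.mul_const (Real.log 2)
        simpa [Pi.sub_def] using ((h1.sub h2).sub h3).congr_deriv (by ring)
      rw [hd.deriv]
      have hlog2 : Real.log 2 < 0.7 := by
        have := Real.log_two_lt_d9
        linarith
      have hy14 : y * (1 - y) ≤ 1/4 := by nlinarith
      have hpos : 0 < y * (1 - y) := by positivity
      have : (4 : ℝ) ≤ 1 / (y * (1-y)) := by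
        rw [le_div_iff₀ hpos]; linarith
      have heq : -(1/(1-y)) - 1/y = -(1 / (y * (1-y))) := by
        field_simp; ring
      rw [heq]
      nlinarith
  rcases eq_or_lt_of_le hx2 with rfl | hlt
  · have : f (1/2) = 0 := by norm_num [hf]
    linarith [this]
  · have h12 : f (1/2) < f x := hanti (left_mem_Icc.2 hx2) (right_mem_Icc.2 hx2) hlt
    have : f (1/2) = 0 := by norm_num [hf]
    rw [this] at h12
    simp only [hf] at h12
    linarith

lemma phi_mono : MonotoneOn (fun x => Real.binEntropy x - (2*x - 2*x^2) * Real.log 2)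
    (Icc (0:ℝ) (1/2)) := by
  apply monotoneOn_of_deriv_nonneg (convex_Icc _ _)
  · exact (Real.binEntropy_continuous.continuousOn).sub (by fun_prop)
  · intro y hy
    rw [interior_Icc, mem_Ioo] at hy
    apply DifferentiableAt.differentiableWithinAt
    exact (Real.differentiableAt_binEntropy hy.1.ne' (by linarith [hy.2])).sub (by fun_prop)
  · intro y hy
    rw [interior_Icc, mem_Ioo] at hy
    have hy1 : y < 1 := by linarith [hy.2]
    have hd : HasDerivAt (fun x => Real.binEntropy x - (2*x - 2*x^2) * Real.log 2)
        ((Real.log (1 - y) - Real.log y) - (2 - 4*y) * Real.log 2) y := by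
      have h1 : HasDerivAt Real.binEntropy (Real.log (1 - y) - Real.log y) y :=
        Real.hasDerivAt_binEntropy hy.1.ne' hy1.ne
      have h2 : HasDerivAt (fun x : ℝ => (2*x - 2*x^2) * Real.log 2)
          ((2 - 4*y) * Real.log 2) y := by
        have : HasDerivAt (fun x : ℝ => 2*x - 2*x^2) (2 - 4*y) y := by
          have := ((hasDerivAt_id y).const_mul 2).sub
            (((hasDerivAt_pow 2 y)).const_mul 2)
          simpa [Pi.sub_def] using this.congr_deriv (by ring)
        simpa using this.mul_const (Real.log 2)
      exact h1.sub h2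
    rw [hd.deriv]
    have := key_ineq hy.1 hy.2.le
    linarith

/-- The binary entropy function `H(x) = -x·log₂ x - (1-x)·log₂(1-x)`. -/
noncomputable def binEntropy2 (x : ℝ) : ℝ :=
  -x * Real.logb 2 x - (1 - x) * Real.logb 2 (1 - x)

/-- For `0 < δ ≤ b ≤ 1/2`, the binary entropy satisfies `H(b) - H(b-δ) ≥ 2δ²`. -/
theorem stmt11 (b δ : ℝ) (hb : b ≤ 1 / 2) (hδ0 : 0 < δ) (hδb : δ ≤ b) :
    2 * δ ^ 2 ≤ binEntropy2 b - binEntropy2 (b - δ) := by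
  have hmem1 : b - δ ∈ Icc (0:ℝ) (1/2) := ⟨by linarith, by linarith⟩
  have hmem2 : b ∈ Icc (0:ℝ) (1/2) := ⟨by linarith, hb⟩
  have hmono := phi_mono hmem1 hmem2 (by linarith)
  have hlog2 : (0:ℝ) < Real.log 2 := Real.log_pos (by norm_num)
  -- binEntropy b - binEntropy (b-δ) ≥ (2b-2b² - (2(b-δ)-2(b-δ)²)) * log 2
  have h1 : (2*δ^2) * Real.log 2 ≤ Real.binEntropy b - Real.binEntropy (b - δ) := by
    simp only at hmono
    have hexp : (2*b - 2*b^2) * Real.log 2 - (2*(b-δ) - 2*(b-δ)^2) * Real.log 2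
        = (2*δ - 4*b*δ + 2*δ^2) * Real.log 2 := by ring
    nlinarith [mul_nonneg (mul_nonneg (by linarith : (0:ℝ) ≤ 2*δ) (by linarith : (0:ℝ) ≤ 1 - 2*b)) hlog2.le]
  have heq1 := binEntropy2_eq b
  have heq2 := binEntropy2_eq (b - δ)
  rw [binEntropy2, binEntropy2, heq1, heq2, div_sub_div_same, le_div_iff₀ hlog2]
  linarith
end

section
/- Let λ be a partition of m with Young diagram whose columns have lengths j_1 ≥ j_2 ≥ … ≥ j_t, and let d ≥ m. Then the product Π_{(a,b)∈λ} (d + b - a) over the cells of λ (a the row index, b the column index) satisfies Π_{(a,b)∈λ}(d+b-a) ≥ d·(d-1)·⋯·(d-m+1). -/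
/-- Let `λ` be a partition of `m` (encoded as a decreasingly sorted list `L` of positive
integers summing to `m`), and let `d ≥ m`. Then the product over the cells `(a,b)` of the
Young diagram of `λ` (with `0`-indexed row `a` and column `b`, so the cell in row `a`,
column `b` contributes `d + b - a`) satisfies
`Π_{(a,b)∈λ} (d + b - a) ≥ d·(d-1)⋯(d-m+1)`. -/
theorem stmt13 (m d : ℕ) (hd : m ≤ d) (L : List ℕ)
    (hsort : L.Pairwise (· ≥ ·)) (hpos : ∀ x ∈ L, 0 < x) (hsum : L.sum = m) :
    ∏ j ∈ Finset.range m, ((d : ℤ) - j) ≤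
      ∏ a ∈ Finset.range L.length, ∏ b ∈ Finset.range (L.getD a 0), ((d : ℤ) + b - a) := by
  induction L generalizing m d with
  | nil =>
    simp only [List.sum_nil] at hsum
    subst hsum
    simp
  | cons x L ih =>
    have hx : 0 < x := hpos x (by simp)
    have hmeq : m = x + L.sum := by rw [← hsum]; simp
    have hd1 : 1 ≤ d := by omega
    have hxd : x ≤ d := by omega
    have hsd : x + L.sum ≤ d := by omega
    have key := ih L.sum (d - 1) (by omega) hsort.of_cons
      (fun y hy => hpos y (by simp [hy])) rfl
    rw [Nat.cast_sub hd1, Nat.cast_one] at key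
    rw [List.length_cons, Finset.prod_range_succ']
    simp only [List.getD_cons_succ, List.getD_cons_zero]
    rw [hmeq, Finset.prod_range_add]
    have h1 : ∏ j ∈ Finset.range x, ((d : ℤ) - j) ≤
        ∏ b ∈ Finset.range x, ((d : ℤ) + b - ((0:ℕ):ℤ)) := by
      apply Finset.prod_le_prod
      · intro i hi
        have hi' : i < x := Finset.mem_range.mp hi
        have : (i : ℤ) < d := by exact_mod_cast lt_of_lt_of_le hi' hxd
        linarith
      · intro i hi
        have : (0 : ℤ) ≤ (i : ℤ) := Int.natCast_nonneg i
        push_cast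
        linarith
    have h2 : ∏ j ∈ Finset.range L.sum, ((d : ℤ) - ((x + j : ℕ) : ℤ)) ≤
        ∏ a ∈ Finset.range L.length, ∏ b ∈ Finset.range (L.getD a 0),
          ((d : ℤ) + b - ((a + 1 : ℕ) : ℤ)) := by
      calc ∏ j ∈ Finset.range L.sum, ((d : ℤ) - ((x + j : ℕ) : ℤ))
          ≤ ∏ j ∈ Finset.range L.sum, ((d : ℤ) - 1 - j) := by
            apply Finset.prod_le_prod
            · intro i hi
              have hi' : i < L.sum := Finset.mem_range.mp hi
              have : ((x : ℤ) + i) < d := by exact_mod_cast by omega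
              push_cast
              linarith
            · intro i hi
              have hx' : (1 : ℤ) ≤ (x : ℤ) := by exact_mod_cast hx
              push_cast
              linarith
        _ ≤ ∏ a ∈ Finset.range L.length, ∏ b ∈ Finset.range (L.getD a 0),
              ((d : ℤ) - 1 + b - a) := key
        _ = ∏ a ∈ Finset.range L.length, ∏ b ∈ Finset.range (L.getD a 0),
              ((d : ℤ) + b - ((a + 1 : ℕ) : ℤ)) := by
            apply Finset.prod_congr rfl
            intro a _
            apply Finset.prod_congr rfl
            intro b _
            push_cast
            ring
    have hnn : (0 : ℤ) ≤ ∏ j ∈ Finset.range L.sum, ((d : ℤ) - ((x + j : ℕ) : ℤ)) := by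
      apply Finset.prod_nonneg
      intro i hi
      have hi' : i < L.sum := Finset.mem_range.mp hi
      have : ((x : ℤ) + i) ≤ d := by exact_mod_cast by omega
      push_cast
      linarith
    have hnn2 : (0 : ℤ) ≤ ∏ b ∈ Finset.range x, ((d : ℤ) + b - ((0:ℕ):ℤ)) := by
      apply Finset.prod_nonneg
      intro i hi
      have : (0 : ℤ) ≤ (i : ℤ) := Int.natCast_nonneg i
      have hd' : (0 : ℤ) ≤ (d : ℤ) := Int.natCast_nonneg d
      push_cast
      linarith
    calc (∏ j ∈ Finset.range x, ((d : ℤ) - j)) *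
        ∏ j ∈ Finset.range L.sum, ((d : ℤ) - ((x + j : ℕ) : ℤ))
      ≤ (∏ b ∈ Finset.range x, ((d : ℤ) + b - ((0:ℕ):ℤ))) *
        ∏ a ∈ Finset.range L.length, ∏ b ∈ Finset.range (L.getD a 0),
          ((d : ℤ) + b - ((a + 1 : ℕ) : ℤ)) := mul_le_mul h1 h2 hnn hnn2
    _ = _ := mul_comm _ _
end
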